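/- Let θ_k, θ_i, θ_{-i} be positive reals with θ_i ≤ θ_k ≤ 2θ_i. Then (θ_i/(θ_i+θ_{-i}))·ln(1 + (θ_k-θ_i)θ_{-i}/((θ_k+θ_{-i})θ_i)) + (θ_{-i}/(θ_i+θ_{-i}))·ln(1 - (θ_k-θ_i)/(θ_k+θ_{-i})) ≥ -((θ_k-θ_i)²·θ_{-i})/((θ_k+θ_{-i})²·θ_i). -/

import Mathlib

-- log(1+a) ≥ a - a^2 for a ≥ 0
lemma logOneAdd_ge (a : ℝ) (ha : 0 ≤ a) : a - a^2 ≤ Real.log (1 + a) := by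
  have h1 : (0:ℝ) < 1 + a := by linarith
  have h2 : (0:ℝ) < 1/(1+a) := by positivity
  have := Real.log_le_sub_one_of_pos h2
  rw [Real.log_div one_ne_zero (ne_of_gt h1), Real.log_one] at this
  have key : 1 - 1/(1+a) ≤ Real.log (1+a) := by linarith
  have heq : 1 - 1/(1+a) = a/(1+a) := by field_simp; ring
  have : a - a^2 ≤ 1 - 1/(1+a) := by
    rw [heq, le_div_iff₀ h1]
    nlinarith [mul_nonneg (mul_nonneg ha ha) ha]
  linarith

-- log(1-b) ≥ -b - b^2/(2(1-b)) for 0 ≤ b < 1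
lemma logOneSub_ge (b : ℝ) (hb0 : 0 ≤ b) (hb1 : b < 1) :
    -b - b^2/(2*(1-b)) ≤ Real.log (1 - b) := by
  set f : ℝ → ℝ := fun x => Real.log (1 - x) + x + x^2/(2*(1-x)) with hf
  have hd : ∀ x ∈ Set.Ico (0:ℝ) 1, HasDerivAt f (x^2/(2*(1-x)^2)) x := by
    intro x hx
    have hx1 : x < 1 := hx.2
    have hne : (1:ℝ) - x ≠ 0 := by intro h; linarith [hx.2]
    have hpos : (0:ℝ) < 1 - x := by linarith
    have h1 : HasDerivAt (fun x : ℝ => 1 - x) (-1) x := by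
      simpa using (hasDerivAt_id x).const_sub 1
    have h2 : HasDerivAt (fun x : ℝ => Real.log (1 - x)) (-1/(1-x)) x := h1.log hne
    have h3 : HasDerivAt (fun x : ℝ => x^2) (2*x) x := by
      simpa using hasDerivAt_pow 2 x
    have h4 : HasDerivAt (fun x : ℝ => 2*(1-x)) (-2) x := by
      simpa using h1.const_mul 2
    have hne2 : 2*(1-x) ≠ 0 := by positivity
    have h5 := h3.div h4 hne2
    have h6 := (h2.add (hasDerivAt_id x)).add h5
    refine h6.congr_deriv ?_
    field_simp
    ring
  have hmono : MonotoneOn f (Set.Icc 0 b) := by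
    apply monotoneOn_of_deriv_nonneg (convex_Icc 0 b)
    · apply ContinuousOn.mono _ (Set.Icc_subset_Ico_right hb1)
      intro x hx
      exact ((hd x hx).continuousAt).continuousWithinAt
    · intro x hx
      rw [interior_Icc] at hx
      exact ((hd x ⟨le_of_lt hx.1, lt_of_lt_of_le hx.2 (le_of_lt hb1)⟩).differentiableAt).differentiableWithinAt
    · intro x hx
      rw [interior_Icc] at hx
      rw [(hd x ⟨le_of_lt hx.1, lt_of_lt_of_le hx.2 (le_of_lt hb1)⟩).deriv]
      positivity
  have h0 : f 0 = 0 := by simp [hf]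
  have := hmono (Set.left_mem_Icc.mpr hb0) (Set.right_mem_Icc.mpr hb0) hb0
  rw [h0] at this
  simp only [hf] at this
  linarith
theorem stmt_4 (θk θi θmi : ℝ) (hθk : 0 < θk) (hθi : 0 < θi) (hθmi : 0 < θmi)
    (h1 : θi ≤ θk) (h2 : θk ≤ 2 * θi) :
    (θi / (θi + θmi)) * Real.log (1 + (θk - θi) * θmi / ((θk + θmi) * θi)) +
      (θmi / (θi + θmi)) * Real.log (1 - (θk - θi) / (θk + θmi)) ≥
    -((θk - θi) ^ 2 * θmi / ((θk + θmi) ^ 2 * θi)) := by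
  have hS : (0:ℝ) < θi + θmi := by linarith
  have hT : (0:ℝ) < θk + θmi := by linarith
  set a : ℝ := (θk - θi) * θmi / ((θk + θmi) * θi) with ha_def
  set b : ℝ := (θk - θi) / (θk + θmi) with hb_def
  have ha0 : 0 ≤ a := by
    apply div_nonneg
    · nlinarith
    · positivity
  have hb0 : 0 ≤ b := by
    apply div_nonneg <;> linarith
  have hb1 : b < 1 := by
    rw [hb_def, div_lt_one hT]; linarith
  have hl1 := logOneAdd_ge a ha0
  have hl2 := logOneSub_ge b hb0 hb1
  have hp : (0:ℝ) ≤ θi / (θi + θmi) := by positivity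
  have hq : (0:ℝ) ≤ θmi / (θi + θmi) := by positivity
  have hstep : θi / (θi + θmi) * (a - a^2) + θmi / (θi + θmi) * (-b - b^2/(2*(1-b)))
      ≤ (θi / (θi + θmi)) * Real.log (1 + a) + (θmi / (θi + θmi)) * Real.log (1 - b) :=
    add_le_add (mul_le_mul_of_nonneg_left hl1 hp) (mul_le_mul_of_nonneg_left hl2 hq)
  have hkey : θi / (θi + θmi) * (a - a^2) + θmi / (θi + θmi) * (-b - b^2/(2*(1-b)))
      = -((θk - θi) ^ 2 * θmi / ((θk + θmi) ^ 2 * θi))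
        + (θk - θi)^2 * θmi * (2*θi - θk + θmi) / (2*(θi + θmi)^2*(θk + θmi)^2) := by
    have h1b : 1 - b = (θi + θmi)/(θk + θmi) := by
      rw [hb_def]; field_simp; ring
    rw [h1b, ha_def, hb_def]
    field_simp
    ring
  have hpos : 0 ≤ (θk - θi)^2 * θmi * (2*θi - θk + θmi) / (2*(θi + θmi)^2*(θk + θmi)^2) := by
    apply div_nonneg
    · apply mul_nonneg (by positivity)
      linarith
    · positivity
  linarith
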